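/- Suppose (X, d_X, ν_X) is the Gromov–Hausdorff–Prokhorov limit of compact metric measure spaces (X_n, d_{X_n}, ν_{X_n}). Then ν_X has full support if and only if liminf_{n → ∞} ρ_ε^{X_n} > 0 for every ε > 0, where ρ_ε^Z := inf_{z ∈ Z} ν_Z(C_ε(z)) and C_ε(z) is the closed ε-ball. -/

import Mathlib

open MeasureTheory Metric Set Filter

/-- A sequence of compact metric probability spaces converges to a limit space in the
Gromov–Hausdorff–Prokhorov sense if, for every `ε > 0`, eventually the spaces can be
isometrically embedded into a common metric space with Hausdorff distance of the images
and Prokhorov distance of the pushforward measures both `< ε`. -/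
def GHPTendsto (X : ℕ → Type) [∀ n, MetricSpace (X n)]
    [∀ n, MeasurableSpace (X n)] [∀ n, BorelSpace (X n)]
    (μ : ∀ n, Measure (X n))
    (Y : Type) [MetricSpace Y] [MeasurableSpace Y] [BorelSpace Y]
    (ν : Measure Y) : Prop :=
  ∀ ε : ℝ, 0 < ε → ∀ᶠ n in atTop,
    ∃ (Z : Type) (_ : MetricSpace Z) (_ : MeasurableSpace Z) (_ : BorelSpace Z)
      (φ : X n → Z) (ψ : Y → Z), Isometry φ ∧ Isometry ψ ∧
      hausdorffDist (Set.range φ) (Set.range ψ) < ε ∧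
      levyProkhorovDist ((μ n).map φ) (ν.map ψ) < ε

private lemma probNonempty {α : Type} [MeasurableSpace α] (μ : Measure α)
    [IsProbabilityMeasure μ] : Nonempty α := by
  by_contra h
  rw [not_nonempty_iff] at h
  have h1 : μ univ = 1 := measure_univ
  rw [Set.univ_eq_empty_iff.mpr h, measure_empty] at h1
  exact zero_ne_one h1

private lemma uniformBallBound {Y : Type} [MetricSpace Y] [CompactSpace Y]
    [MeasurableSpace Y] (ν : Measure Y) (hpos : ν.IsOpenPosMeasure)
    {r : ℝ} (hr : 0 < r) : ∃ c : ENNReal, 0 < c ∧ ∀ y : Y, c ≤ ν (Metric.ball y r) := by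
  haveI := hpos
  cases isEmpty_or_nonempty Y with
  | inl h => exact ⟨1, one_pos, fun y => (h.false y).elim⟩
  | inr h =>
    obtain ⟨t, ht⟩ := isCompact_univ.elim_finite_subcover
      (fun y : Y => Metric.ball y (r/2)) (fun _ => isOpen_ball)
      (fun y _ => mem_iUnion.mpr ⟨y, mem_ball_self (half_pos hr)⟩)
    have htne : t.Nonempty := by
      obtain ⟨y⟩ := h
      obtain ⟨i, hi, _⟩ := mem_iUnion₂.mp (ht (mem_univ y))
      exact ⟨i, hi⟩
    refine ⟨t.inf' htne (fun i => ν (Metric.ball i (r/2))), ?_, ?_⟩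
    · rw [Finset.lt_inf'_iff]
      exact fun i _ => Metric.measure_ball_pos ν i (half_pos hr)
    · intro y
      obtain ⟨i, hi, hyi⟩ := mem_iUnion₂.mp (ht (mem_univ y))
      refine (Finset.inf'_le _ hi).trans (measure_mono fun z hz => ?_)
      refine Metric.mem_ball.mpr ?_
      calc dist z y ≤ dist z i + dist i y := dist_triangle z i y
        _ < r/2 + r/2 := add_lt_add (Metric.mem_ball.mp hz)
            (by rw [dist_comm]; exact Metric.mem_ball.mp hyi)
        _ = r := add_halves r

/-- If `(X_n)` converges to `X` in the GHP sense, then the limit measure has full support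
if and only if `liminf_n ρ_ε^{X_n} > 0` for every `ε > 0`. -/
theorem fullSupport_iff_liminf_rho_pos
    (X : ℕ → Type) [∀ n, MetricSpace (X n)] [∀ n, CompactSpace (X n)]
    [∀ n, MeasurableSpace (X n)] [∀ n, BorelSpace (X n)]
    (μ : ∀ n, Measure (X n)) [∀ n, IsProbabilityMeasure (μ n)]
    (Y : Type) [MetricSpace Y] [CompactSpace Y] [MeasurableSpace Y] [BorelSpace Y]
    (ν : Measure Y) [IsProbabilityMeasure ν]
    (hconv : GHPTendsto X μ Y ν) :
    ν.IsOpenPosMeasure ↔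
      ∀ ε : ℝ, 0 < ε →
        0 < Filter.liminf (fun n => ⨅ x : X n, μ n (Metric.closedBall x ε)) atTop := by
  haveI hYne : Nonempty Y := probNonempty ν
  constructor
  · intro hpos ε hε
    obtain ⟨c₀, hc₀, hc⟩ := uniformBallBound ν hpos (half_pos hε)
    set c : ENNReal := min c₀ 1 with hcdef
    have hcpos : 0 < c := lt_min hc₀ one_pos
    have hcne : c ≠ ⊤ := ((min_le_right _ _).trans_lt ENNReal.one_lt_top).ne
    set η : ℝ := min (ε/4) (c.toReal/2) with hηdef
    have hctr : 0 < c.toReal := ENNReal.toReal_pos hcpos.ne' hcne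
    have hη : 0 < η := lt_min (by positivity) (by positivity)
    have hηε : η ≤ ε/4 := min_le_left _ _
    have hηc : ENNReal.ofReal η < c := by
      calc ENNReal.ofReal η ≤ ENNReal.ofReal (c.toReal/2) :=
            ENNReal.ofReal_le_ofReal (min_le_right _ _)
        _ < ENNReal.ofReal c.toReal :=
            (ENNReal.ofReal_lt_ofReal_iff hctr).mpr (half_lt_self hctr)
        _ = c := ENNReal.ofReal_toReal hcne
    have key : ∀ᶠ n in atTop,
        c - ENNReal.ofReal η ≤ ⨅ x : X n, μ n (Metric.closedBall x ε) := by
      filter_upwards [hconv η hη] with n hn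
      obtain ⟨Z, _, _, _, φ, ψ, hφ, hψ, hH, hLP⟩ := hn
      haveI : Nonempty (X n) := probNonempty (μ n)
      have hφm : Measurable φ := hφ.continuous.measurable
      have hψm : Measurable ψ := hψ.continuous.measurable
      haveI : IsProbabilityMeasure ((μ n).map φ) :=
        Measure.isProbabilityMeasure_map hφm.aemeasurable
      haveI : IsProbabilityMeasure (ν.map ψ) :=
        Measure.isProbabilityMeasure_map hψm.aemeasurable
      have hLP' : levyProkhorovEDist ((μ n).map φ) (ν.map ψ) < ENNReal.ofReal η :=
        (ENNReal.lt_ofReal_iff_toReal_lt (levyProkhorovEDist_ne_top _ _)).mpr hLP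
      refine le_iInf fun x => ?_
      have hfin : EMetric.hausdorffEdist (Set.range φ) (Set.range ψ) ≠ ⊤ :=
        Metric.hausdorffEdist_ne_top_of_nonempty_of_bounded (range_nonempty φ)
          (range_nonempty ψ) (isCompact_range hφ.continuous).isBounded
          (isCompact_range hψ.continuous).isBounded
      obtain ⟨z, ⟨y, rfl⟩, hzy⟩ := Metric.exists_dist_lt_of_hausdorffDist_lt (mem_range_self x) hH hfin
      have hsub : Metric.thickening η (Metric.closedBall (ψ y) (ε/2))
          ⊆ Metric.closedBall (φ x) ε := by
        intro z hz
        obtain ⟨b, hb, hzb⟩ := Metric.mem_thickening_iff.mp hz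
        refine Metric.mem_closedBall.mpr ?_
        calc dist z (φ x) ≤ dist z b + dist b (ψ y) + dist (ψ y) (φ x) :=
              dist_triangle4 z b (ψ y) (φ x)
          _ ≤ η + ε/2 + η := by
              refine add_le_add (add_le_add hzb.le (Metric.mem_closedBall.mp hb)) ?_
              rw [dist_comm]; exact hzy.le
          _ ≤ ε/4 + ε/2 + ε/4 := add_le_add (add_le_add hηε le_rfl) hηε
          _ = ε := by ring
      have step := right_measure_le_of_levyProkhorovEDist_lt hLP'
        (measurableSet_closedBall (x := ψ y) (ε := ε/2))
      rw [ENNReal.toReal_ofReal hη.le] at step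
      have h1 : c ≤ (ν.map ψ) (Metric.closedBall (ψ y) (ε/2)) := by
        rw [Measure.map_apply hψm measurableSet_closedBall, hψ.preimage_closedBall]
        exact (min_le_left _ _).trans
          ((hc y).trans (measure_mono Metric.ball_subset_closedBall))
      have h2 : ((μ n).map φ) (Metric.thickening η (Metric.closedBall (ψ y) (ε/2)))
          ≤ μ n (Metric.closedBall x ε) := by
        rw [← hφ.preimage_closedBall x ε, ← Measure.map_apply hφm measurableSet_closedBall]
        exact measure_mono hsub
      exact tsub_le_iff_right.mpr (h1.trans (step.trans (add_le_add_left h2 _)))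
    have hle : c - ENNReal.ofReal η
        ≤ Filter.liminf (fun n => ⨅ x : X n, μ n (Metric.closedBall x ε)) atTop :=
      le_liminf_of_le (by isBoundedDefault) key
    exact lt_of_lt_of_le (tsub_pos_iff_lt.mpr hηc) hle
  · intro h
    refine ⟨fun U hU hUne => ?_⟩
    obtain ⟨y, hy⟩ := hUne
    obtain ⟨r, hr, hball⟩ := Metric.isOpen_iff.mp hU y hy
    set ε : ℝ := r/4 with hεdef
    have hε : 0 < ε := by positivity
    set L := Filter.liminf (fun n => ⨅ x : X n, μ n (Metric.closedBall x ε)) atTop with hLdef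
    have hL : 0 < L := h ε hε
    set c : ENNReal := min L 1 / 2 with hcdef
    have hminpos : 0 < min L 1 := lt_min hL one_pos
    have hminne : min L 1 ≠ ⊤ := ((min_le_right _ _).trans_lt ENNReal.one_lt_top).ne
    have hcpos : 0 < c := ENNReal.half_pos hminpos.ne'
    have hcne : c ≠ ⊤ := by
      refine ne_top_of_le_ne_top hminne ?_
      exact ENNReal.half_le_self
    have hcL : c < L := lt_of_lt_of_le (ENNReal.half_lt_self hminpos.ne' hminne)
      (min_le_left _ _)
    have hcev : ∀ᶠ n in atTop, c < ⨅ x : X n, μ n (Metric.closedBall x ε) :=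
      eventually_lt_of_lt_liminf hcL
    have hctr : 0 < c.toReal := ENNReal.toReal_pos hcpos.ne' hcne
    set η : ℝ := min (r/4) (c.toReal/2) with hηdef
    have hη : 0 < η := lt_min (by positivity) (by positivity)
    have hηr : η ≤ r/4 := min_le_left _ _
    have hηc : ENNReal.ofReal η < c := by
      calc ENNReal.ofReal η ≤ ENNReal.ofReal (c.toReal/2) :=
            ENNReal.ofReal_le_ofReal (min_le_right _ _)
        _ < ENNReal.ofReal c.toReal :=
            (ENNReal.ofReal_lt_ofReal_iff hctr).mpr (half_lt_self hctr)
        _ = c := ENNReal.ofReal_toReal hcne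
    obtain ⟨n, hn1, hn2⟩ := (hcev.and (hconv η hη)).exists
    obtain ⟨Z, _, _, _, φ, ψ, hφ, hψ, hH, hLP⟩ := hn2
    haveI : Nonempty (X n) := probNonempty (μ n)
    have hφm : Measurable φ := hφ.continuous.measurable
    have hψm : Measurable ψ := hψ.continuous.measurable
    haveI : IsProbabilityMeasure ((μ n).map φ) :=
      Measure.isProbabilityMeasure_map hφm.aemeasurable
    haveI : IsProbabilityMeasure (ν.map ψ) :=
      Measure.isProbabilityMeasure_map hψm.aemeasurable
    have hLP' : levyProkhorovEDist ((μ n).map φ) (ν.map ψ) < ENNReal.ofReal η :=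
      (ENNReal.lt_ofReal_iff_toReal_lt (levyProkhorovEDist_ne_top _ _)).mpr hLP
    have hfin : EMetric.hausdorffEdist (Set.range φ) (Set.range ψ) ≠ ⊤ :=
      Metric.hausdorffEdist_ne_top_of_nonempty_of_bounded (range_nonempty φ)
        (range_nonempty ψ) (isCompact_range hφ.continuous).isBounded
        (isCompact_range hψ.continuous).isBounded
    obtain ⟨z, ⟨x, rfl⟩, hzy⟩ := Metric.exists_dist_lt_of_hausdorffDist_lt' (mem_range_self y) hH hfin
    have hsub : ψ ⁻¹' (Metric.thickening η (Metric.closedBall (φ x) ε))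
        ⊆ Metric.ball y r := by
      intro y' hy'
      obtain ⟨b, hb, hy'b⟩ := Metric.mem_thickening_iff.mp hy'
      refine Metric.mem_ball.mpr ?_
      have : dist (ψ y') (ψ y) < r := by
        calc dist (ψ y') (ψ y) ≤ dist (ψ y') b + dist b (φ x) + dist (φ x) (ψ y) :=
              dist_triangle4 (ψ y') b (φ x) (ψ y)
          _ < η + ε + η := by
              refine add_lt_add_of_le_of_lt
                (add_le_add hy'b.le (Metric.mem_closedBall.mp hb)) hzy
          _ ≤ r/4 + r/4 + r/4 := add_le_add (add_le_add hηr le_rfl) hηr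
          _ < r := by linarith
      rwa [hψ.dist_eq] at this
    have step := left_measure_le_of_levyProkhorovEDist_lt hLP'
      (measurableSet_closedBall (x := φ x) (ε := ε))
    rw [ENNReal.toReal_ofReal hη.le] at step
    have h1 : c ≤ ((μ n).map φ) (Metric.closedBall (φ x) ε) := by
      rw [Measure.map_apply hφm measurableSet_closedBall, hφ.preimage_closedBall]
      exact hn1.le.trans (iInf_le _ x)
    have h2 : (ν.map ψ) (Metric.thickening η (Metric.closedBall (φ x) ε))
        ≤ ν (Metric.ball y r) := by
      rw [Measure.map_apply hψm isOpen_thickening.measurableSet]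
      exact measure_mono hsub
    have hchain : c ≤ ν (Metric.ball y r) + ENNReal.ofReal η :=
      h1.trans (step.trans (add_le_add_left h2 _))
    have hbpos : 0 < ν (Metric.ball y r) := by
      by_contra h0
      push_neg at h0
      rw [le_zero_iff] at h0
      rw [h0, zero_add] at hchain
      exact absurd hchain (not_le.mpr hηc)
    exact (lt_of_lt_of_le hbpos (measure_mono hball)).ne'
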